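/- arXiv:2007.02323 — 3 statements merged into one kernel-verified Lean document; each statement's English description precedes it below -/
import Mathlib

section
/- Let n be a positive integer, T > 0, and let 0 = θ₀ ≤ θ₁ ≤ ⋯ ≤ θₙ be real numbers. For γ ∈ [0, T] define φ̃ₙ(γ) = min(n, min{k : θₖ ≥ γ}) if γ < T (equal to n if the set is empty), and φ̃ₙ(T) = n. Then for every γ ∈ [0, T], |γ − θ_{φ̃ₙ(γ)}| ≤ |T − θₙ| + max_{1 ≤ k ≤ n} (θₖ − θ_{k−1}). -/
/-- For `0 = θ₀ ≤ θ₁ ≤ ⋯ ≤ θₙ`, `γ ∈ [0,T]` and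
`φ̃ₙ(γ) = min(n, min{k : θₖ ≥ γ})` if `γ < T` (equal to `n` if empty) with
`φ̃ₙ(T) = n`, we have
`|γ − θ_{φ̃ₙ(γ)}| ≤ |T − θₙ| + max_{1 ≤ k ≤ n} (θₖ − θ_{k−1})`. -/
theorem stmt5 (n : ℕ) (hn : 1 ≤ n) (T : ℝ) (hT : 0 < T)
    (θ : ℕ → ℝ) (hθ0 : θ 0 = 0)
    (hmono : ∀ k, k < n → θ k ≤ θ (k + 1))
    (γ : ℝ) (hγ : γ ∈ Set.Icc 0 T)
    (φt : ℕ) (hφt : φt = if γ < T then sInf ({k | k ≤ n ∧ γ ≤ θ k} ∪ {n}) else n) :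
    |γ - θ φt| ≤ |T - θ n| +
      (Finset.Icc 1 n).sup' (Finset.nonempty_Icc.mpr hn)
        (fun k => θ k - θ (k - 1)) := by
  obtain ⟨hγ0, hγT⟩ := hγ
  set M := (Finset.Icc 1 n).sup' (Finset.nonempty_Icc.mpr hn)
      (fun k => θ k - θ (k - 1)) with hM
  have hM0 : 0 ≤ M := by
    have h1 : θ 1 - θ (1 - 1) ≤ M :=
      Finset.le_sup' (fun k => θ k - θ (k - 1)) (Finset.mem_Icc.mpr ⟨le_refl 1, hn⟩)
    have h2 := hmono 0 hn
    simp only [Nat.sub_self, hθ0] at h1 h2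
    linarith
  have habs : 0 ≤ |T - θ n| := abs_nonneg _
  have hmono' : ∀ i j, i ≤ j → j ≤ n → θ i ≤ θ j := by
    intro i j hij hjn
    induction j with
    | zero => rw [Nat.le_zero.mp hij]
    | succ m ih =>
      rcases Nat.lt_or_ge i (m + 1) with h | h
      · exact le_trans (ih (Nat.lt_succ_iff.mp h) (by omega)) (hmono m (by omega))
      · have : i = m + 1 := by omega
        rw [this]
  by_cases hlt : γ < T
  · rw [hφt, if_pos hlt]
    set S := ({k | k ≤ n ∧ γ ≤ θ k} ∪ {n} : Set ℕ) with hS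
    have hnS : n ∈ S := Or.inr rfl
    by_cases hcase : γ ≤ θ n
    · have hInf : sInf S ∈ S := Nat.sInf_mem ⟨n, hnS⟩
      have hle : sInf S ≤ n := Nat.sInf_le hnS
      have hγle : γ ≤ θ (sInf S) := by
        rcases hInf with h | h
        · exact h.2
        · rw [Set.mem_singleton_iff] at h; rw [h]; exact hcase
      rcases Nat.eq_zero_or_pos (sInf S) with h0 | hpos
      · rw [h0, hθ0] at hγle ⊢
        have : γ = 0 := le_antisymm hγle hγ0
        rw [this]
        simp only [sub_zero, abs_zero]
        linarith
      · have hnot : sInf S - 1 ∉ S := Nat.notMem_of_lt_sInf (by omega)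
        have hlt' : θ (sInf S - 1) < γ := by
          by_contra h
          push_neg at h
          exact hnot (Or.inl ⟨by omega, h⟩)
        have hgap : θ (sInf S) - θ (sInf S - 1) ≤ M :=
          Finset.le_sup' (fun k => θ k - θ (k - 1)) (Finset.mem_Icc.mpr ⟨hpos, hle⟩)
        have heq : |γ - θ (sInf S)| = θ (sInf S) - γ := by
          rw [abs_sub_comm, abs_of_nonneg (by linarith)]
        rw [heq]
        linarith
    · push_neg at hcase
      have hSeq : S = {n} := by
        ext k
        simp only [hS, Set.mem_union, Set.mem_setOf_eq, Set.mem_singleton_iff]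
        constructor
        · rintro (⟨hk, hγk⟩ | h)
          · exact absurd (le_trans hγk (hmono' k n hk le_rfl)) (not_le.mpr hcase)
          · exact h
        · intro h; exact Or.inr h
      rw [hSeq]
      simp only [csInf_singleton]
      have h1 : |γ - θ n| = γ - θ n := abs_of_nonneg (by linarith)
      have h2 : T - θ n ≤ |T - θ n| := le_abs_self _
      linarith
  · rw [hφt, if_neg hlt]
    have hγeq : γ = T := le_antisymm hγT (not_lt.mp hlt)
    rw [hγeq]
    linarith [le_abs_self (T - θ n)]
end

section
/- Let b > 0 and 0 < A ≤ b. Then (1 − e^{−A})(e^{A} − 1)(1 + e^{b}) ≤ (e^{A} − e^{−A})(e^{b} − 1). Consequently, setting p¹ = ((1 − e^{−A})(e^{A} − 1)) / ((e^{A} − e^{−A})(e^{b} − 1)), p^{−1} = e^{b} p¹ and p⁰ = 1 − p¹ − p^{−1}, each of p¹, p^{−1}, p⁰ lies in [0, 1] and p¹ + p^{−1} + p⁰ = 1, so they form a valid probability vector. -/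
/-- For `0 < A ≤ b`,
`(1 − e^{−A})(e^{A} − 1)(1 + e^{b}) ≤ (e^{A} − e^{−A})(e^{b} − 1)`; consequently
`p¹ = ((1 − e^{−A})(e^{A} − 1)) / ((e^{A} − e^{−A})(e^{b} − 1))`,
`p^{−1} = e^{b} p¹` and `p⁰ = 1 − p¹ − p^{−1}` all lie in `[0,1]` and sum to `1`,
so they form a valid probability vector. -/
theorem stmt6 (b A : ℝ) (hb : 0 < b) (hA : 0 < A) (hAb : A ≤ b) :
    (1 - Real.exp (-A)) * (Real.exp A - 1) * (1 + Real.exp b)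
      ≤ (Real.exp A - Real.exp (-A)) * (Real.exp b - 1) ∧
    ∀ p1 pm1 p0 : ℝ,
      p1 = (1 - Real.exp (-A)) * (Real.exp A - 1) /
        ((Real.exp A - Real.exp (-A)) * (Real.exp b - 1)) →
      pm1 = Real.exp b * p1 →
      p0 = 1 - p1 - pm1 →
      p1 ∈ Set.Icc (0 : ℝ) 1 ∧ pm1 ∈ Set.Icc (0 : ℝ) 1 ∧ p0 ∈ Set.Icc (0 : ℝ) 1 ∧
        p1 + pm1 + p0 = 1 := by
  have hx : 1 < Real.exp A := Real.one_lt_exp_iff.mpr hA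
  have hy : 1 < Real.exp b := Real.one_lt_exp_iff.mpr hb
  have hxy : Real.exp A ≤ Real.exp b := Real.exp_le_exp.mpr hAb
  have hne : Real.exp (-A) = (Real.exp A)⁻¹ := Real.exp_neg A
  have hxpos : (0:ℝ) < Real.exp A := by linarith
  set x := Real.exp A with hxdef
  set y := Real.exp b with hydef
  have hinvlt : x⁻¹ < 1 := by
    rw [inv_lt_one_iff₀]; right; exact hx
  have hinvpos : (0:ℝ) < x⁻¹ := by positivity
  have hmul : x * x⁻¹ = 1 := mul_inv_cancel₀ (ne_of_gt hxpos)
  have key : (1 - Real.exp (-A)) * (x - 1) * (1 + y) ≤ (x - Real.exp (-A)) * (y - 1) := by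
    rw [hne]
    nlinarith [mul_nonneg (sub_nonneg.mpr hxy) (sub_nonneg.mpr (le_of_lt hinvlt)),
      sq_nonneg (x - 1), mul_pos hxpos hxpos]
  refine ⟨key, ?_⟩
  intro p1 pm1 p0 hp1 hpm1 hp0
  have hNnn : (0:ℝ) ≤ (1 - Real.exp (-A)) * (x - 1) := by
    rw [hne]; nlinarith
  have hDpos : (0:ℝ) < (x - Real.exp (-A)) * (y - 1) := by
    rw [hne]
    apply mul_pos
    · nlinarith
    · linarith
  have hp1nn : 0 ≤ p1 := by rw [hp1]; positivity
  have hp1y : p1 * (1 + y) ≤ 1 := by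
    rw [hp1, div_mul_eq_mul_div, div_le_one hDpos]
    linarith [key]
  have hyp : (0:ℝ) < 1 + y := by linarith
  have hp1le : p1 ≤ 1 := by nlinarith
  have hpm1nn : 0 ≤ pm1 := by rw [hpm1]; positivity
  have hpm1le : pm1 ≤ 1 := by rw [hpm1]; nlinarith
  have hp0nn : 0 ≤ p0 := by rw [hp0, hpm1]; nlinarith
  have hp0le : p0 ≤ 1 := by rw [hp0]; linarith
  exact ⟨⟨hp1nn, hp1le⟩, ⟨hpm1nn, hpm1le⟩, ⟨hp0nn, hp0le⟩, by rw [hp0]; ring⟩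
end

section
/- Let (Ω, F, P) be a probability space with a filtration (F_k)_{k=0,…,n} such that F₀ is P-trivial, and let (f_k)_{k=0}^n and (g_k)_{k=0}^n be integrable adapted real-valued processes with f_k ≤ g_k almost surely for every k. For stopping times ζ, η with values in {0,…,n} set H(ζ, η) = g_ζ 1_{ζ < η} + f_η 1_{η ≤ ζ}. Define J_n = f_n and, backwards for k = n−1,…,0, J_k = max(f_k, min(g_k, E[J_{k+1} | F_k])). Then inf_ζ sup_η E[H(ζ, η)] = sup_η inf_ζ E[H(ζ, η)] = E[J₀], where the infimum and supremum range over all stopping times with values in {0,…,n}; in particular the discrete Dynkin game has a value, given by the backward dynamic programming recursion. -/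
open MeasureTheory

section Aux

variable {Ω : Type*} {m0 : MeasurableSpace Ω} {μ : Measure Ω}
  {ℱ : Filtration ℕ m0} {n : ℕ}

lemma stop_meas {τ : Ω → ℕ} (hτ : IsStoppingTime ℱ (fun ω => (τ ω : WithTop ℕ))) : Measurable τ :=
  measurable_to_nat fun y => by
    have := ℱ.le _ _ (hτ.measurableSet_eq_of_countable (τ y))
    change MeasurableSet {ω | WithTop.some (τ ω) = WithTop.some (τ y)} at this
    simp only [WithTop.coe_inj] at this
    exact this

lemma integrable_stopped' (J : ℕ → Ω → ℝ) (hJi : ∀ k, k ≤ n → Integrable (J k) μ)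
    (τ : Ω → ℕ) (hτm : Measurable τ) (hτn : ∀ ω, τ ω ≤ n) :
    Integrable (fun ω => J (τ ω) ω) μ := by
  have h : (fun ω => J (τ ω) ω) =
      fun ω => ∑ j ∈ Finset.range (n+1), Set.indicator {ω | τ ω = j} (J j) ω := by
    funext ω
    rw [Finset.sum_eq_single (τ ω)]
    · refine (Set.indicator_of_mem ?_ (J (τ ω))).symm
      exact rfl
    · intro b _ hb
      refine Set.indicator_of_notMem ?_ (J b)
      exact fun h => hb (show τ ω = b from h).symm
    · intro h
      exact absurd (Finset.mem_range.2 (Nat.lt_succ_of_le (hτn ω))) h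
  rw [h]
  refine integrable_finset_sum _ fun j hj => (hJi j ?_).indicator (hτm (measurableSet_singleton j))
  exact Nat.lt_succ_iff.mp (Finset.mem_range.mp hj)

lemma key_le [IsFiniteMeasure μ] (J : ℕ → Ω → ℝ) (hJi : ∀ k, k ≤ n → Integrable (J k) μ)
    {τ : Ω → ℕ} (hτ : IsStoppingTime ℱ (fun ω => (τ ω : WithTop ℕ))) (hτn : ∀ ω, τ ω ≤ n)
    (hs : ∀ k, k < n → ∀ᵐ ω ∂μ, k < τ ω → (μ[J (k+1) | ℱ k]) ω ≤ J k ω) :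
    ∫ ω, J (τ ω) ω ∂μ ≤ ∫ ω, J 0 ω ∂μ := by
  have hτm : Measurable τ := stop_meas hτ
  have hmin : ∀ k : ℕ, Integrable (fun ω => J (min (τ ω) k) ω) μ := fun k =>
    integrable_stopped' J hJi _ (hτm.min measurable_const)
      (fun ω => le_trans (min_le_left _ _) (hτn ω))
  have main : ∀ k : ℕ, ∫ ω, J (min (τ ω) k) ω ∂μ ≤ ∫ ω, J 0 ω ∂μ := by
    intro k
    induction k with
    | zero => simp
    | succ k ih =>
      by_cases hk : k < n
      · refine le_trans ?_ ih
        set s : Set Ω := {ω | τ ω ≤ k}ᶜ with hs_def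
        have hsF : MeasurableSet[ℱ k] s := by
          have := (hτ k).compl
          change MeasurableSet[ℱ k] {ω | WithTop.some (τ ω) ≤ WithTop.some k}ᶜ at this
          simp only [WithTop.coe_le_coe] at this
          exact this
        have hsm : MeasurableSet s := ℱ.le k _ hsF
        have hdecomp : (fun ω => J (min (τ ω) (k+1)) ω)
            = (fun ω => J (min (τ ω) k) ω) + s.indicator (fun ω => J (k+1) ω - J k ω) := by
          funext ω
          by_cases h : τ ω ≤ k
          · have h1 : min (τ ω) (k+1) = τ ω := min_eq_left (le_trans h (Nat.le_succ k))
            have h2 : min (τ ω) k = τ ω := min_eq_left h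
            have hns : ω ∉ s := by simp [hs_def, h]
            simp [h1, h2, Set.indicator_of_notMem hns]
          · have hk1 : k + 1 ≤ τ ω := Nat.succ_le_of_lt (Nat.lt_of_not_le h)
            have h1 : min (τ ω) (k+1) = k+1 := min_eq_right hk1
            have h2 : min (τ ω) k = k := min_eq_right (Nat.le_of_lt (Nat.lt_of_not_le h))
            have hms : ω ∈ s := h
            simp only [h1, h2, Pi.add_apply, Set.indicator_of_mem hms]
            ring
        have hint2 : Integrable (s.indicator fun ω => J (k+1) ω - J k ω) μ :=
          ((hJi (k+1) (by omega)).sub (hJi k (by omega))).indicator hsm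
        have hre : ∫ ω, J (min (τ ω) (k+1)) ω ∂μ
            = ∫ ω, (J (min (τ ω) k) ω + s.indicator (fun ω => J (k+1) ω - J k ω) ω) ∂μ :=
          integral_congr_ae (Filter.Eventually.of_forall fun ω => congrFun hdecomp ω)
        rw [hre, integral_add (hmin k) hint2]
        have hind : ∫ ω, s.indicator (fun ω => J (k+1) ω - J k ω) ω ∂μ ≤ 0 := by
          rw [integral_indicator hsm,
            integral_sub ((hJi (k+1) (by omega)).integrableOn) ((hJi k (by omega)).integrableOn),
            ← setIntegral_condExp (ℱ.le k) (hJi (k+1) (by omega)) hsF]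
          have hle : (μ[J (k+1) | ℱ k]) ≤ᵐ[μ.restrict s] J k := by
            rw [Filter.EventuallyLE, ae_restrict_iff' hsm]
            filter_upwards [hs k hk] with ω h hω
            exact h (Nat.lt_of_not_le hω)
          have := setIntegral_mono_ae_restrict (integrable_condExp.integrableOn)
            ((hJi k (by omega)).integrableOn) hle
          linarith
        linarith
      · have heq : (fun ω => J (min (τ ω) (k+1)) ω) = fun ω => J (min (τ ω) k) ω := by
          funext ω
          have h1 : τ ω ≤ k := le_trans (hτn ω) (Nat.le_of_not_lt hk)
          rw [min_eq_left h1, min_eq_left (le_trans h1 (Nat.le_succ k))]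
        rw [heq]; exact ih
  have hres := main n
  have heq : ∀ ω, min (τ ω) n = τ ω := fun ω => min_eq_left (hτn ω)
  simpa only [heq] using hres

lemma key_ge [IsFiniteMeasure μ] (J : ℕ → Ω → ℝ) (hJi : ∀ k, k ≤ n → Integrable (J k) μ)
    {τ : Ω → ℕ} (hτ : IsStoppingTime ℱ (fun ω => (τ ω : WithTop ℕ))) (hτn : ∀ ω, τ ω ≤ n)
    (hs : ∀ k, k < n → ∀ᵐ ω ∂μ, k < τ ω → J k ω ≤ (μ[J (k+1) | ℱ k]) ω) :
    ∫ ω, J 0 ω ∂μ ≤ ∫ ω, J (τ ω) ω ∂μ := by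
  have h := key_le (μ := μ) (ℱ := ℱ) (fun k => -(J k)) (fun k hk => (hJi k hk).neg) hτ hτn ?_
  · have e1 : ∫ ω, (fun k => -(J k)) (τ ω) ω ∂μ = -∫ ω, J (τ ω) ω ∂μ := by
      simp only [Pi.neg_apply]
      exact integral_neg _
    have e2 : ∫ ω, (fun k => -(J k)) 0 ω ∂μ = -∫ ω, J 0 ω ∂μ := by
      simp only [Pi.neg_apply]
      exact integral_neg _
    rw [e1, e2] at h
    linarith
  · intro k hk
    filter_upwards [hs k hk, condExp_neg (J (k+1)) (m := ℱ k) (μ := μ)] with ω h1 h2 hklt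
    simp only [Pi.neg_apply] at h2 ⊢
    rw [h2]
    exact neg_le_neg (h1 hklt)

open Classical in
lemma sum_ind (F : ℕ → Ω → ℝ) (τ : Ω → ℕ) (hτn : ∀ ω, τ ω ≤ n) (c : Set Ω) (ω : Ω) :
    (∑ j ∈ Finset.range (n+1), Set.indicator ({ω | τ ω = j} ∩ c) (F j) ω)
      = if ω ∈ c then F (τ ω) ω else 0 := by
  by_cases hc : ω ∈ c
  · rw [if_pos hc, Finset.sum_eq_single (τ ω)]
    · refine Set.indicator_of_mem ?_ (F (τ ω))
      exact Set.mem_inter rfl hc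
    · intro b _ hb
      refine Set.indicator_of_notMem ?_ (F b)
      simp only [Set.mem_inter_iff, Set.mem_setOf_eq, not_and]
      exact fun h _ => hb h.symm
    · intro h
      exact absurd (Finset.mem_range.2 (Nat.lt_succ_of_le (hτn ω))) h
  · rw [if_neg hc]
    refine Finset.sum_eq_zero fun j _ => Set.indicator_of_notMem ?_ (F j)
    simp only [Set.mem_inter_iff, Set.mem_setOf_eq, not_and]
    exact fun _ => hc

lemma H_decomp (f g : ℕ → Ω → ℝ) {ζ η : Ω → ℕ} (hζn : ∀ ω, ζ ω ≤ n) (hηn : ∀ ω, η ω ≤ n) :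
    (fun ω => if ζ ω < η ω then g (ζ ω) ω else f (η ω) ω)
      = fun ω => (∑ j ∈ Finset.range (n+1),
          Set.indicator ({ω | ζ ω = j} ∩ {ω | ζ ω < η ω}) (g j) ω)
        + (∑ j ∈ Finset.range (n+1),
          Set.indicator ({ω | η ω = j} ∩ {ω | ζ ω < η ω}ᶜ) (f j) ω) := by
  funext ω
  rw [sum_ind (n := n) g ζ hζn _ ω, sum_ind (n := n) f η hηn _ ω]
  by_cases h : ζ ω < η ω
  · simp [h]
  · simp [h]

lemma integrable_H (f g : ℕ → Ω → ℝ)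
    (hfi : ∀ k, Integrable (f k) μ) (hgi : ∀ k, Integrable (g k) μ)
    {ζ η : Ω → ℕ} (hζm : Measurable ζ) (hηm : Measurable η)
    (hζn : ∀ ω, ζ ω ≤ n) (hηn : ∀ ω, η ω ≤ n) :
    Integrable (fun ω => if ζ ω < η ω then g (ζ ω) ω else f (η ω) ω) μ := by
  rw [H_decomp (n := n) f g hζn hηn]
  have hC : MeasurableSet {ω | ζ ω < η ω} := measurableSet_lt hζm hηm
  refine Integrable.add ?_ ?_
  · refine integrable_finset_sum _ fun j _ => (hgi j).indicator ?_
    exact (hζm (measurableSet_singleton j)).inter hC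
  · refine integrable_finset_sum _ fun j _ => (hfi j).indicator ?_
    exact (hηm (measurableSet_singleton j)).inter hC.compl

lemma H_bound (f g : ℕ → Ω → ℝ)
    (hfi : ∀ k, Integrable (f k) μ) (hgi : ∀ k, Integrable (g k) μ)
    {ζ η : Ω → ℕ} (hζm : Measurable ζ) (hηm : Measurable η)
    (hζn : ∀ ω, ζ ω ≤ n) (hηn : ∀ ω, η ω ≤ n) :
    |∫ ω, (if ζ ω < η ω then g (ζ ω) ω else f (η ω) ω) ∂μ|
      ≤ ∫ ω, (∑ j ∈ Finset.range (n+1), (|f j ω| + |g j ω|)) ∂μ := by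
  have hni := norm_integral_le_integral_norm (μ := μ)
    (fun ω => if ζ ω < η ω then g (ζ ω) ω else f (η ω) ω)
  simp only [Real.norm_eq_abs] at hni
  refine le_trans hni ?_
  refine integral_mono ((integrable_H (n := n) f g hfi hgi hζm hηm hζn hηn).abs)
    (integrable_finset_sum _ fun j _ => ((hfi j).abs.add (hgi j).abs)) ?_
  intro ω
  have hnn : ∀ j ∈ Finset.range (n+1), (0:ℝ) ≤ |f j ω| + |g j ω| := fun j _ =>
    add_nonneg (abs_nonneg _) (abs_nonneg _)
  by_cases h : ζ ω < η ω
  · simp only [if_pos h]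
    refine le_trans ?_ (Finset.single_le_sum hnn
      (Finset.mem_range.2 (Nat.lt_succ_of_le (hζn ω))))
    exact le_add_of_nonneg_left (abs_nonneg _)
  · simp only [if_neg h]
    refine le_trans ?_ (Finset.single_le_sum hnn
      (Finset.mem_range.2 (Nat.lt_succ_of_le (hηn ω))))
    exact le_add_of_nonneg_right (abs_nonneg _)

end Aux

lemma abs_max_min_le (a b c : ℝ) : |max a (min b c)| ≤ |a| + (|b| + |c|) := by
  rcases le_total a (min b c) with h | h
  · rw [max_eq_right h]
    rcases le_total b c with h2 | h2
    · rw [min_eq_left h2]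
      have h3 := abs_nonneg a; have h4 := abs_nonneg c
      linarith
    · rw [min_eq_right h2]
      have h3 := abs_nonneg a; have h4 := abs_nonneg b
      linarith
  · rw [max_eq_left h]
    have h3 := abs_nonneg b; have h4 := abs_nonneg c
    linarith

/-- Discrete Dynkin game on `{0,…,n}` with `F₀` trivial, integrable
adapted payoffs `f_k ≤ g_k` a.s., payoff `H(ζ,η) = g_ζ 1_{ζ<η} + f_η 1_{η≤ζ}`, and
value processes `J_n = f_n`, `J_k = max(f_k, min(g_k, E[J_{k+1} | F_k]))`. Then
`inf_ζ sup_η E[H(ζ,η)] = sup_η inf_ζ E[H(ζ,η)] = E[J₀]`, the inf/sup ranging over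
stopping times with values in `{0,…,n}`. -/
theorem stmt11 {Ω : Type*} {m0 : MeasurableSpace Ω} (μ : Measure Ω)
    [IsProbabilityMeasure μ]
    (ℱ : Filtration ℕ m0) (n : ℕ)
    (htrivial : ∀ s : Set Ω, MeasurableSet[ℱ 0] s → μ s = 0 ∨ μ s = 1)
    (f g : ℕ → Ω → ℝ)
    (hfa : ∀ k, Measurable[ℱ k] (f k)) (hga : ∀ k, Measurable[ℱ k] (g k))
    (hfi : ∀ k, Integrable (f k) μ) (hgi : ∀ k, Integrable (g k) μ)
    (hfg : ∀ k, ∀ᵐ ω ∂μ, f k ω ≤ g k ω)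
    (J : ℕ → Ω → ℝ) (hJn : J n = f n)
    (hJ : ∀ k < n, J k = fun ω => max (f k ω) (min (g k ω) ((μ[J (k + 1) | ℱ k]) ω))) :
    sInf {x : ℝ | ∃ ζ : Ω → ℕ, IsStoppingTime ℱ (fun ω => (ζ ω : WithTop ℕ)) ∧ (∀ ω, ζ ω ≤ n) ∧
        x = sSup {y : ℝ | ∃ η : Ω → ℕ, IsStoppingTime ℱ (fun ω => (η ω : WithTop ℕ)) ∧ (∀ ω, η ω ≤ n) ∧
          y = ∫ ω, (if ζ ω < η ω then g (ζ ω) ω else f (η ω) ω) ∂μ}}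
      = ∫ ω, J 0 ω ∂μ ∧
    sSup {y : ℝ | ∃ η : Ω → ℕ, IsStoppingTime ℱ (fun ω => (η ω : WithTop ℕ)) ∧ (∀ ω, η ω ≤ n) ∧
        y = sInf {x : ℝ | ∃ ζ : Ω → ℕ, IsStoppingTime ℱ (fun ω => (ζ ω : WithTop ℕ)) ∧ (∀ ω, ζ ω ≤ n) ∧
          x = ∫ ω, (if ζ ω < η ω then g (ζ ω) ω else f (η ω) ω) ∂μ}}
      = ∫ ω, J 0 ω ∂μ := by
  classical
  -- measurability and integrability of J
  have hJmi : ∀ d k, k + d = n → Measurable[ℱ k] (J k) ∧ Integrable (J k) μ := by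
    intro d
    induction d with
    | zero =>
      intro k hk
      have hkn : k = n := by omega
      subst hkn
      rw [hJn]
      exact ⟨hfa k, hfi k⟩
    | succ d ih =>
      intro k hk
      have hkn : k < n := by omega
      obtain ⟨h1m, h1i⟩ := ih (k+1) (by omega)
      rw [hJ k hkn]
      constructor
      · exact (hfa k).max ((hga k).min stronglyMeasurable_condExp.measurable)
      · have hb : Integrable (fun ω => |f k ω| + (|g k ω| + |(μ[J (k+1) | ℱ k]) ω|)) μ :=
          (hfi k).abs.add ((hgi k).abs.add integrable_condExp.abs)
        refine Integrable.mono' hb ?_ (Filter.Eventually.of_forall fun ω => ?_)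
        · exact (((hfa k).max ((hga k).min
            stronglyMeasurable_condExp.measurable)).mono (ℱ.le k) le_rfl).aestronglyMeasurable
        · simp only [Real.norm_eq_abs]
          exact abs_max_min_le _ _ _
  have hJm : ∀ k, k ≤ n → Measurable[ℱ k] (J k) := fun k hk => (hJmi (n-k) k (by omega)).1
  have hJi : ∀ k, k ≤ n → Integrable (J k) μ := fun k hk => (hJmi (n-k) k (by omega)).2
  have hJapp : ∀ k, k < n → ∀ ω,
      J k ω = max (f k ω) (min (g k ω) ((μ[J (k + 1) | ℱ k]) ω)) := by
    intro k hk ω; rw [hJ k hk]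
  have hJf : ∀ k, k ≤ n → ∀ ω, f k ω ≤ J k ω := by
    intro k hk ω
    rcases lt_or_eq_of_le hk with h | h
    · rw [hJapp k h ω]; exact le_max_left _ _
    · subst h; rw [hJn]
  have hJg : ∀ k, k ≤ n → ∀ᵐ ω ∂μ, J k ω ≤ g k ω := by
    intro k hk
    rcases lt_or_eq_of_le hk with h | h
    · filter_upwards [hfg k] with ω hω
      rw [hJapp k h ω]
      exact max_le hω (min_le_left _ _)
    · subst h
      filter_upwards [hfg k] with ω hω
      rw [hJn]
      exact hω
  -- the two optimal stopping times
  set ζs : Ω → ℕ := fun ω => sInf {k | k = n ∨ J k ω = g k ω} with hζsdef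
  set ηs : Ω → ℕ := fun ω => sInf {k | k = n ∨ J k ω = f k ω} with hηsdef
  have hζne : ∀ ω, ({k | k = n ∨ J k ω = g k ω}).Nonempty := fun ω => ⟨n, Or.inl rfl⟩
  have hηne : ∀ ω, ({k | k = n ∨ J k ω = f k ω}).Nonempty := fun ω => ⟨n, Or.inl rfl⟩
  have hζn : ∀ ω, ζs ω ≤ n := fun ω => Nat.sInf_le (Or.inl rfl)
  have hηn : ∀ ω, ηs ω ≤ n := fun ω => Nat.sInf_le (Or.inl rfl)
  have hζlt : ∀ ω k, k < ζs ω → J k ω ≠ g k ω := fun ω k hk h =>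
    Nat.notMem_of_lt_sInf hk (Or.inr h)
  have hηlt : ∀ ω k, k < ηs ω → J k ω ≠ f k ω := fun ω k hk h =>
    Nat.notMem_of_lt_sInf hk (Or.inr h)
  have hζeq : ∀ ω, ζs ω < n → J (ζs ω) ω = g (ζs ω) ω := by
    intro ω h
    rcases Nat.sInf_mem (hζne ω) with h1 | h1
    · exact absurd h1 h.ne
    · exact h1
  have hηeq : ∀ ω, J (ηs ω) ω = f (ηs ω) ω := by
    intro ω
    rcases Nat.sInf_mem (hηne ω) with h1 | h1
    · have h2 : ηs ω = n := h1
      rw [h2, hJn]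
    · exact h1
  have hst : ∀ (F : ℕ → Ω → ℝ), (∀ k, Measurable[ℱ k] (F k)) →
      IsStoppingTime ℱ (fun ω => ((sInf {k | k = n ∨ J k ω = F k ω} : ℕ) : WithTop ℕ)) := by
    intro F hFm k
    change MeasurableSet[ℱ k] {ω | WithTop.some (sInf {k | k = n ∨ J k ω = F k ω}) ≤ WithTop.some k}
    simp only [WithTop.coe_le_coe]
    by_cases hk : n ≤ k
    · have huniv : {ω | sInf {k | k = n ∨ J k ω = F k ω} ≤ k} = Set.univ :=
        Set.eq_univ_of_forall fun ω => le_trans (Nat.sInf_le (Or.inl rfl)) hk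
      rw [huniv]; exact MeasurableSet.univ
    · have hset : {ω | sInf {k | k = n ∨ J k ω = F k ω} ≤ k}
          = ⋃ j ∈ Finset.range (k+1), {ω | J j ω = F j ω} := by
        ext ω
        simp only [Set.mem_setOf_eq, Set.mem_iUnion, Finset.mem_range, Nat.lt_succ_iff,
          exists_prop]
        constructor
        · intro h
          rcases Nat.sInf_mem (⟨n, Or.inl rfl⟩ :
              ({j | j = n ∨ J j ω = F j ω}).Nonempty) with h1 | h1
          · exact absurd (h1 ▸ h) hk
          · exact ⟨_, h, h1⟩
        · rintro ⟨j, hj, hjeq⟩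
          exact le_trans (Nat.sInf_le (Or.inr hjeq)) hj
      rw [hset]
      refine Finset.measurableSet_biUnion _ fun j hj => ?_
      have hjk : j ≤ k := Nat.lt_succ_iff.mp (Finset.mem_range.mp hj)
      exact ℱ.mono hjk _ (measurableSet_eq_fun (hJm j (by omega)) (hFm j))
  have hζst : IsStoppingTime ℱ (fun ω => (ζs ω : WithTop ℕ)) := hst g hga
  have hηst : IsStoppingTime ℱ (fun ω => (ηs ω : WithTop ℕ)) := hst f hfa
  -- Lemma A : ∫ H(ζs, η) ≤ ∫ J 0
  have hA : ∀ η : Ω → ℕ, IsStoppingTime ℱ (fun ω => (η ω : WithTop ℕ)) → (∀ ω, η ω ≤ n) →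
      ∫ ω, (if ζs ω < η ω then g (ζs ω) ω else f (η ω) ω) ∂μ ≤ ∫ ω, J 0 ω ∂μ := by
    intro η hη hηn'
    have hτ : IsStoppingTime ℱ (fun ω => ((min (ζs ω) (η ω) : ℕ) : WithTop ℕ)) := hζst.min hη
    have hτn : ∀ ω, min (ζs ω) (η ω) ≤ n := fun ω => le_trans (min_le_right _ _) (hηn' ω)
    have hint1 := integrable_H (n := n) (μ := μ) f g hfi hgi (stop_meas hζst)
      (stop_meas hη) hζn hηn'
    have hint2 := integrable_stopped' (n := n) (μ := μ) J hJi _ (stop_meas hτ) hτn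
    have hmono : ∀ ω, (if ζs ω < η ω then g (ζs ω) ω else f (η ω) ω)
        ≤ J (min (ζs ω) (η ω)) ω := by
      intro ω
      by_cases h : ζs ω < η ω
      · rw [if_pos h, min_eq_left (le_of_lt h)]
        exact (hζeq ω (lt_of_lt_of_le h (hηn' ω))).ge
      · rw [if_neg h, min_eq_right (Nat.le_of_not_lt h)]
        exact hJf _ (hηn' ω) ω
    refine le_trans (integral_mono hint1 hint2 hmono) ?_
    refine key_le (ℱ := ℱ) J hJi hτ hτn ?_
    intro k hk
    filter_upwards [hfg k] with ω hfgω hklt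
    have hne : J k ω ≠ g k ω := hζlt ω k (lt_of_lt_of_le hklt (min_le_left _ _))
    rw [hJapp k hk ω] at hne ⊢
    by_cases hc : (μ[J (k+1) | ℱ k]) ω ≤ g k ω
    · rw [min_eq_right hc]
      exact le_max_right _ _
    · exfalso
      apply hne
      rw [min_eq_left (le_of_not_ge hc), max_eq_right hfgω]
  -- Lemma B : ∫ J 0 ≤ ∫ H(ζ, ηs)
  have hB' : ∀ ζ : Ω → ℕ, IsStoppingTime ℱ (fun ω => (ζ ω : WithTop ℕ)) → (∀ ω, ζ ω ≤ n) →
      ∫ ω, J 0 ω ∂μ ≤ ∫ ω, (if ζ ω < ηs ω then g (ζ ω) ω else f (ηs ω) ω) ∂μ := by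
    intro ζ hζ hζn'
    have hτ : IsStoppingTime ℱ (fun ω => ((min (ζ ω) (ηs ω) : ℕ) : WithTop ℕ)) := hζ.min hηst
    have hτn : ∀ ω, min (ζ ω) (ηs ω) ≤ n := fun ω => le_trans (min_le_left _ _) (hζn' ω)
    have hint1 := integrable_H (n := n) (μ := μ) f g hfi hgi (stop_meas hζ)
      (stop_meas hηst) hζn' hηn
    have hint2 := integrable_stopped' (n := n) (μ := μ) J hJi _ (stop_meas hτ) hτn
    have hae : ∀ᵐ ω ∂μ, ∀ j, j ≤ n → J j ω ≤ g j ω := by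
      rw [ae_all_iff]
      intro j
      by_cases hj : j ≤ n
      · filter_upwards [hJg j hj] with ω hω _
        exact hω
      · exact Filter.Eventually.of_forall fun ω h => absurd h hj
    have hmono : ∀ᵐ ω ∂μ, J (min (ζ ω) (ηs ω)) ω
        ≤ (if ζ ω < ηs ω then g (ζ ω) ω else f (ηs ω) ω) := by
      filter_upwards [hae] with ω hω
      by_cases h : ζ ω < ηs ω
      · rw [if_pos h, min_eq_left (le_of_lt h)]
        exact hω (ζ ω) (hζn' ω)
      · rw [if_neg h, min_eq_right (Nat.le_of_not_lt h)]
        exact (hηeq ω).le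
    refine le_trans ?_ (integral_mono_ae hint2 hint1 hmono)
    refine key_ge (ℱ := ℱ) J hJi hτ hτn ?_
    intro k hk
    refine Filter.Eventually.of_forall fun ω hklt => ?_
    have hne : J k ω ≠ f k ω := hηlt ω k (lt_of_lt_of_le hklt (min_le_right _ _))
    rw [hJapp k hk ω] at hne ⊢
    rcases max_cases (f k ω) (min (g k ω) ((μ[J (k+1) | ℱ k]) ω)) with ⟨he, _⟩ | ⟨he, _⟩
    · exact absurd he hne
    · rw [he]
      exact le_trans (min_le_right _ _) le_rfl
  -- bound for sSup/sInf manipulations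
  have hbd : ∀ ζ η : Ω → ℕ, IsStoppingTime ℱ (fun ω => (ζ ω : WithTop ℕ)) → IsStoppingTime ℱ (fun ω => (η ω : WithTop ℕ)) →
      (∀ ω, ζ ω ≤ n) → (∀ ω, η ω ≤ n) →
      |∫ ω, (if ζ ω < η ω then g (ζ ω) ω else f (η ω) ω) ∂μ|
        ≤ ∫ ω, (∑ j ∈ Finset.range (n+1), (|f j ω| + |g j ω|)) ∂μ :=
    fun ζ η hζ hη hζn' hηn' =>
      H_bound f g hfi hgi (stop_meas hζ) (stop_meas hη) hζn' hηn'
  constructor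
  · -- sInf sSup part
    have hlow : ∀ x ∈ {x : ℝ | ∃ ζ : Ω → ℕ, IsStoppingTime ℱ (fun ω => (ζ ω : WithTop ℕ)) ∧ (∀ ω, ζ ω ≤ n) ∧
        x = sSup {y : ℝ | ∃ η : Ω → ℕ, IsStoppingTime ℱ (fun ω => (η ω : WithTop ℕ)) ∧ (∀ ω, η ω ≤ n) ∧
          y = ∫ ω, (if ζ ω < η ω then g (ζ ω) ω else f (η ω) ω) ∂μ}},
        ∫ ω, J 0 ω ∂μ ≤ x := by
      rintro x ⟨ζ, hζ, hζn', rfl⟩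
      refine le_trans (hB' ζ hζ hζn') (le_csSup ⟨∫ ω, (∑ j ∈ Finset.range (n+1),
        (|f j ω| + |g j ω|)) ∂μ, ?_⟩ ⟨ηs, hηst, hηn, rfl⟩)
      rintro y ⟨η, hη, hηn'', rfl⟩
      exact le_trans (le_abs_self _) (hbd ζ η hζ hη hζn' hηn'')
    have hup2 : sSup {y : ℝ | ∃ η : Ω → ℕ, IsStoppingTime ℱ (fun ω => (η ω : WithTop ℕ)) ∧ (∀ ω, η ω ≤ n) ∧
        y = ∫ ω, (if ζs ω < η ω then g (ζs ω) ω else f (η ω) ω) ∂μ} ≤ ∫ ω, J 0 ω ∂μ := by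
      refine csSup_le ⟨_, ⟨ηs, hηst, hηn, rfl⟩⟩ ?_
      rintro y ⟨η, hη, hηn'', rfl⟩
      exact hA η hη hηn''
    refine le_antisymm (le_trans (csInf_le ⟨_, hlow⟩ ⟨ζs, hζst, hζn, rfl⟩) hup2)
      (le_csInf ⟨_, ζs, hζst, hζn, rfl⟩ hlow)
  · -- sSup sInf part
    have hup : ∀ y ∈ {y : ℝ | ∃ η : Ω → ℕ, IsStoppingTime ℱ (fun ω => (η ω : WithTop ℕ)) ∧ (∀ ω, η ω ≤ n) ∧
        y = sInf {x : ℝ | ∃ ζ : Ω → ℕ, IsStoppingTime ℱ (fun ω => (ζ ω : WithTop ℕ)) ∧ (∀ ω, ζ ω ≤ n) ∧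
          x = ∫ ω, (if ζ ω < η ω then g (ζ ω) ω else f (η ω) ω) ∂μ}},
        y ≤ ∫ ω, J 0 ω ∂μ := by
      rintro y ⟨η, hη, hηn'', rfl⟩
      refine le_trans (csInf_le ⟨-(∫ ω, (∑ j ∈ Finset.range (n+1),
        (|f j ω| + |g j ω|)) ∂μ), ?_⟩ ⟨ζs, hζst, hζn, rfl⟩) (hA η hη hηn'')
      rintro x ⟨ζ, hζ, hζn', rfl⟩
      have h1 := hbd ζ η hζ hη hζn' hηn''
      have h2 := neg_abs_le (∫ ω, (if ζ ω < η ω then g (ζ ω) ω else f (η ω) ω) ∂μ)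
      linarith
    have hlo2 : ∫ ω, J 0 ω ∂μ ≤ sInf {x : ℝ | ∃ ζ : Ω → ℕ, IsStoppingTime ℱ (fun ω => (ζ ω : WithTop ℕ)) ∧
        (∀ ω, ζ ω ≤ n) ∧
        x = ∫ ω, (if ζ ω < ηs ω then g (ζ ω) ω else f (ηs ω) ω) ∂μ} := by
      refine le_csInf ⟨_, ζs, hζst, hζn, rfl⟩ ?_
      rintro x ⟨ζ, hζ, hζn', rfl⟩
      exact hB' ζ hζ hζn'
    refine le_antisymm (csSup_le ⟨_, ηs, hηst, hηn, rfl⟩ hup)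
      (le_trans hlo2 (le_csSup ⟨_, hup⟩ ⟨ηs, hηst, hηn, rfl⟩))
end
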